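/- Let 0 < ρ < 1 and consider the n×n matrix A with ρ on the diagonal and superdiagonal and zeros elsewhere, and H = [e_1, ρ·e_n] ∈ ℝ^{n×2}. Then the distance to uncontrollability satisfies d(A,H) ≥ ρ·sin(π/(n+1)) ≥ ρ/(n+1). -/

import Mathlib

open Matrix Real

/-- Least singular value of a matrix `B` with `n` rows:
`σ_min(B) = inf { ‖Bᴴ v‖ : ‖v‖ = 1 }`. -/
noncomputable def sigmaMin {n : ℕ} {m : Type*} [Fintype m] (B : Matrix (Fin n) m ℂ) : ℝ :=
  sInf {x : ℝ | ∃ v : EuclideanSpace ℂ (Fin n), ‖v‖ = 1 ∧ x = ‖Matrix.toEuclideanLin Bᴴ v‖}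

/-- Eising's distance to uncontrollability:
`d(A,H) = inf_{s ∈ ℂ} σ_min [A - sI, H]`. -/
noncomputable def distUnc {n r : ℕ} (A : Matrix (Fin n) (Fin n) ℂ)
    (H : Matrix (Fin n) (Fin r) ℂ) : ℝ :=
  ⨅ s : ℂ, sigmaMin (Matrix.fromCols (A - s • (1 : Matrix (Fin n) (Fin n) ℂ)) H)

/-- The matrix `ρ·J_n(1)`: `ρ` on the diagonal and superdiagonal, zeros elsewhere. -/
def rhoJordan (n : ℕ) (ρ : ℝ) : Matrix (Fin n) (Fin n) ℂ :=
  Matrix.of fun i j =>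
    if (i : ℕ) = (j : ℕ) ∨ (j : ℕ) = (i : ℕ) + 1 then (ρ : ℂ) else 0

section Aux
open Finset

private lemma two_mul_le_aux (a b α : ℝ) (hα : 0 < α) :
    2 * (a * b) ≤ α * a ^ 2 + α⁻¹ * b ^ 2 := by
  have h : α * (α * a ^ 2 + α⁻¹ * b ^ 2 - 2 * (a * b)) = (α * a - b) ^ 2 := by
    field_simp; ring
  nlinarith [sq_nonneg (α * a - b), hα]

private lemma sum_shift_sq (n : ℕ) (x : ℕ → ℝ) (h0 : x 0 = 0) (hend : x (n + 1) = 0) :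
    ∑ j ∈ range (n + 1), x (j + 1) ^ 2 = ∑ j ∈ range (n + 1), x j ^ 2 := by
  have h1 := Finset.sum_range_succ' (fun j => x j ^ 2) (n + 1)
  have h2 := Finset.sum_range_succ (fun j => x j ^ 2) (n + 1)
  simp only [h0, hend] at h1 h2
  rw [h1] at h2
  nlinarith [h2]

private lemma lemB {n : ℕ} (hn : 1 ≤ n) (x : ℕ → ℝ) (h0 : x 0 = 0) (hend : x (n + 1) = 0) :
    2 * ∑ j ∈ range (n + 1), x j * x (j + 1) ≤
      2 * Real.cos (π / (n + 1)) * ∑ j ∈ range (n + 1), x j ^ 2 := by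
  have hn1 : (0 : ℝ) < (n : ℝ) + 1 := by positivity
  set θ : ℝ := π / ((n : ℝ) + 1) with hθdef
  have hθpos : 0 < θ := by positivity
  set c : ℝ := Real.cos θ with hc
  set sf : ℕ → ℝ := fun j => Real.sin ((j : ℝ) * θ) with hsf
  have hs0 : sf 0 = 0 := by simp [hsf]
  have hspos : ∀ j : ℕ, 1 ≤ j → j ≤ n → 0 < sf j := by
    intro j hj1 hj2
    apply Real.sin_pos_of_pos_of_lt_pi
    · have : (1 : ℝ) ≤ (j : ℝ) := by exact_mod_cast hj1
      nlinarith
    · have hj : (j : ℝ) < (n : ℝ) + 1 := by exact_mod_cast Nat.lt_succ_of_le hj2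
      have : (j : ℝ) * θ < ((n : ℝ) + 1) * θ := by nlinarith
      calc (j : ℝ) * θ < ((n : ℝ) + 1) * θ := this
        _ = π := by rw [hθdef]; field_simp
  have hstop : sf (n + 1) = 0 := by
    have h : ((n + 1 : ℕ) : ℝ) * θ = π := by push_cast; rw [hθdef]; field_simp
    simp only [hsf]; rw [h, Real.sin_pi]
  have hrec : ∀ k : ℕ, sf (k + 1 + 1) + sf k = 2 * c * sf (k + 1) := by
    intro k
    simp only [hsf, hc]
    push_cast
    have e1 : ((k : ℝ) + 1 + 1) * θ = ((k : ℝ) + 1) * θ + θ := by ring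
    have e2 : (k : ℝ) * θ = ((k : ℝ) + 1) * θ - θ := by ring
    rw [e1, e2, Real.sin_add, Real.sin_sub]
    ring
  set g : ℕ → ℝ := fun j => sf (j - 1) / sf j * x j ^ 2 with hg
  set A : ℕ → ℝ := fun j => sf (j + 1) / sf j * x j ^ 2 with hA
  have step1 : ∀ j ∈ range (n + 1), 2 * (x j * x (j + 1)) ≤ A j + g (j + 1) := by
    intro j hj
    rw [mem_range] at hj
    have hjn : j ≤ n := by omega
    have hgj : g (j + 1) = sf j / sf (j + 1) * x (j + 1) ^ 2 := by
      simp [hg]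
    rcases Nat.eq_zero_or_pos j with rfl | hj1
    · simp [hA, hgj, h0, hs0]
    rcases eq_or_lt_of_le hjn with rfl | hjlt
    · rw [hgj, hend]
      simp [hA, hstop, hend]
    · have hsj := hspos j hj1 hjn
      have hsj1 := hspos (j + 1) (by omega) (by omega)
      have hαpos : 0 < sf (j + 1) / sf j := div_pos hsj1 hsj
      have hinv : (sf (j + 1) / sf j)⁻¹ = sf j / sf (j + 1) := by
        rw [inv_div]
      rw [hgj, hA, ← hinv]
      exact two_mul_le_aux _ _ _ hαpos
  have hshift : ∑ j ∈ range (n + 1), g (j + 1) = ∑ j ∈ range (n + 1), g j := by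
    have e1 := Finset.sum_range_succ' g (n + 1)
    have e2 := Finset.sum_range_succ g (n + 1)
    have hg0 : g 0 = 0 := by simp [hg, h0]
    have hgn : g (n + 1) = 0 := by simp [hg, hend]
    rw [e2, hgn, add_zero] at e1
    rw [hg0, add_zero] at e1
    linarith [e1]
  have step2 : ∀ j ∈ range (n + 1), A j + g j = 2 * c * x j ^ 2 := by
    intro j hj
    rw [mem_range] at hj
    rcases Nat.eq_zero_or_pos j with rfl | hj1
    · simp [hA, hg, h0]
    obtain ⟨k, rfl⟩ : ∃ k, j = k + 1 := ⟨j - 1, by omega⟩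
    have hne : sf (k + 1) ≠ 0 := (hspos (k + 1) (by omega) (by omega)).ne'
    have hrk := hrec k
    simp only [hA, hg, Nat.add_sub_cancel]
    have e : sf (k + 1 + 1) / sf (k + 1) * x (k + 1) ^ 2 + sf k / sf (k + 1) * x (k + 1) ^ 2
        = (sf (k + 1 + 1) + sf k) / sf (k + 1) * x (k + 1) ^ 2 := by ring
    rw [e, hrk]
    have e2 : 2 * c * sf (k + 1) / sf (k + 1) = 2 * c := by field_simp
    rw [e2]
  calc 2 * ∑ j ∈ range (n + 1), x j * x (j + 1)
      = ∑ j ∈ range (n + 1), 2 * (x j * x (j + 1)) := by rw [mul_sum]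
    _ ≤ ∑ j ∈ range (n + 1), (A j + g (j + 1)) := Finset.sum_le_sum step1
    _ = ∑ j ∈ range (n + 1), A j + ∑ j ∈ range (n + 1), g (j + 1) := Finset.sum_add_distrib
    _ = ∑ j ∈ range (n + 1), A j + ∑ j ∈ range (n + 1), g j := by rw [hshift]
    _ = ∑ j ∈ range (n + 1), (A j + g j) := Finset.sum_add_distrib.symm
    _ = ∑ j ∈ range (n + 1), 2 * c * x j ^ 2 := Finset.sum_congr rfl step2
    _ = 2 * Real.cos (π / (n + 1)) * ∑ j ∈ range (n + 1), x j ^ 2 := by rw [← mul_sum]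

private lemma lemA {n : ℕ} (hn : 1 ≤ n) (x : ℕ → ℝ) (h0 : x 0 = 0) (hend : x (n + 1) = 0)
    (ρ t : ℝ) (hρ : 0 ≤ ρ) (ht : 0 ≤ t) :
    ρ ^ 2 * Real.sin (π / (n + 1)) ^ 2 * ∑ j ∈ range (n + 1), x j ^ 2 ≤
      ∑ j ∈ range (n + 1), (ρ * x j - t * x (j + 1)) ^ 2 := by
  have hB := lemB hn x h0 hend
  have hshift := sum_shift_sq n x h0 hend
  have hexp : ∑ j ∈ range (n + 1), (ρ * x j - t * x (j + 1)) ^ 2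
      = ρ ^ 2 * ∑ j ∈ range (n + 1), x j ^ 2 + t ^ 2 * ∑ j ∈ range (n + 1), x (j + 1) ^ 2
        - 2 * ρ * t * ∑ j ∈ range (n + 1), x j * x (j + 1) := by
    rw [mul_sum, mul_sum, mul_sum, ← sum_add_distrib, ← sum_sub_distrib]
    exact Finset.sum_congr rfl fun j _ => by ring
  rw [hexp, hshift]
  set S := ∑ j ∈ range (n + 1), x j ^ 2 with hSdef
  set X := ∑ j ∈ range (n + 1), x j * x (j + 1) with hXdef
  have hS : 0 ≤ S := Finset.sum_nonneg fun j _ => sq_nonneg _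
  set c := Real.cos (π / (n + 1)) with hc
  set σ := Real.sin (π / (n + 1)) with hσ
  have hpyth : σ ^ 2 + c ^ 2 = 1 := Real.sin_sq_add_cos_sq _
  have h1 : 0 ≤ (t - ρ * c) ^ 2 * S := mul_nonneg (sq_nonneg _) hS
  have h2 : ρ * t * (2 * X) ≤ ρ * t * (2 * c * S) :=
    mul_le_mul_of_nonneg_left hB (mul_nonneg hρ ht)
  have key : ρ ^ 2 * S + t ^ 2 * S - 2 * ρ * t * (c * S) - ρ ^ 2 * σ ^ 2 * S
      = (t - ρ * c) ^ 2 * S + ρ ^ 2 * S * (1 - c ^ 2 - σ ^ 2) := by ring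
  have hz : (1 : ℝ) - c ^ 2 - σ ^ 2 = 0 := by linarith
  rw [hz, mul_zero, add_zero] at key
  linarith [h1, h2, key]

end Aux

theorem difficult_system_distance_lower_bound {n : ℕ} (hn : 1 ≤ n) (ρ : ℝ)
    (hρ0 : 0 < ρ) (hρ1 : ρ < 1) :
    ρ * Real.sin (π / (n + 1)) ≤ distUnc (rhoJordan n ρ)
        (Matrix.of fun i (j : Fin 2) =>
          if j = 0 then (if (i : ℕ) = 0 then (1 : ℂ) else 0)
          else (if (i : ℕ) = n - 1 then (ρ : ℂ) else 0)) ∧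
    ρ / (n + 1) ≤ ρ * Real.sin (π / (n + 1)) := by
  have hn1 : (0 : ℝ) < (n : ℝ) + 1 := by positivity
  have hnR : (1 : ℝ) ≤ (n : ℝ) := by exact_mod_cast hn
  have hσpos : 0 < Real.sin (π / ((n : ℝ) + 1)) := by
    apply Real.sin_pos_of_pos_of_lt_pi
    · positivity
    · rw [div_lt_iff₀ hn1]
      nlinarith [Real.pi_pos]
  constructor
  · -- main bound
    rw [distUnc]
    apply le_ciInf
    intro s
    rw [sigmaMin]
    apply le_csInf
    · exact ⟨_, ⟨EuclideanSpace.single ⟨0, hn⟩ (1 : ℂ), by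
        rw [EuclideanSpace.norm_single]; norm_num, rfl⟩⟩
    rintro y ⟨v, hv, rfl⟩
    set M := rhoJordan n ρ - s • (1 : Matrix (Fin n) (Fin n) ℂ) with hM
    set H : Matrix (Fin n) (Fin 2) ℂ := Matrix.of fun i (j : Fin 2) =>
          if j = 0 then (if (i : ℕ) = 0 then (1 : ℂ) else 0)
          else (if (i : ℕ) = n - 1 then (ρ : ℂ) else 0) with hH
    set w : EuclideanSpace ℂ (Fin n ⊕ Fin 2) :=
      Matrix.toEuclideanLin (Matrix.fromCols M H)ᴴ v with hwdef
    set a : ℂ := (starRingEnd ℂ) ((ρ : ℂ) - s) with ha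
    set t : ℝ := ‖(ρ : ℂ) - s‖ with htdef
    have hat : ‖a‖ = t := by rw [ha, RCLike.norm_conj]
    set u : ℕ → ℂ := fun j => if h : 1 ≤ j ∧ j ≤ n then v ⟨j - 1, by omega⟩ else 0 with hu
    set x : ℕ → ℝ := fun j => ‖u j‖ with hx
    have h0 : x 0 = 0 := by simp [hx, hu]
    have hend : x (n + 1) = 0 := by
      have hc : ¬(1 ≤ n + 1 ∧ n + 1 ≤ n) := by omega
      simp [hx, hu, hc]
    have hu1 : ∀ j : Fin n, u ((j : ℕ) + 1) = v j := by
      intro j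
      have hcond : 1 ≤ (j : ℕ) + 1 ∧ (j : ℕ) + 1 ≤ n := ⟨by omega, j.isLt⟩
      simp only [hu]
      rw [dif_pos hcond]
      exact congrArg v (Fin.ext (by simp))
    have hw : ∀ i, w i = ∑ k : Fin n, (starRingEnd ℂ) (Matrix.fromCols M H k i) * v k := by
      intro i
      rfl
    have hMentry : ∀ k j : Fin n, M k j =
        (if k = j then (ρ : ℂ) - s else 0) + (if (k : ℕ) + 1 = (j : ℕ) then (ρ : ℂ) else 0) := by
      intro k j
      rw [hM]
      simp only [Matrix.sub_apply, Matrix.smul_apply, Matrix.one_apply, rhoJordan,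
        Matrix.of_apply, smul_eq_mul]
      by_cases h1 : k = j
      · subst h1
        have h2 : ¬((k : ℕ) + 1 = (k : ℕ)) := by omega
        simp [h2]
      · have h1' : ¬((k : ℕ) = (j : ℕ)) := fun h => h1 (Fin.ext h)
        by_cases h2 : (j : ℕ) = (k : ℕ) + 1
        · simp [h1, h1', h2]
        · have h2' : ¬((k : ℕ) + 1 = (j : ℕ)) := fun h => h2 h.symm
          simp [h1, h1', h2, h2']
    have hinl : ∀ j : Fin n, w (Sum.inl j) = a * u ((j : ℕ) + 1) + (ρ : ℂ) * u (j : ℕ) := by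
      intro j
      rw [hw]
      have hterm : ∀ k : Fin n, (starRingEnd ℂ) (Matrix.fromCols M H k (Sum.inl j)) * v k
          = a * (if k = j then v k else 0)
            + (ρ : ℂ) * (if (k : ℕ) + 1 = (j : ℕ) then v k else 0) := by
        intro k
        rw [Matrix.fromCols_apply_inl, hMentry k j, map_add,
          apply_ite (starRingEnd ℂ), apply_ite (starRingEnd ℂ), map_zero, add_mul]
        congr 1
        · split_ifs with h
          · rw [← ha]
          · simp
        · split_ifs with h
          · rw [Complex.conj_ofReal]
          · simp
      rw [Finset.sum_congr rfl fun k _ => hterm k, Finset.sum_add_distrib,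
        ← Finset.mul_sum, ← Finset.mul_sum]
      have e1 : (∑ k : Fin n, if k = j then v k else 0) = v j := by
        simp
      have e2 : (∑ k : Fin n, if (k : ℕ) + 1 = (j : ℕ) then v k else 0) = u (j : ℕ) := by
        rcases hj0 : (j : ℕ) with _ | m
        · have : ∀ k : Fin n, ¬((k : ℕ) + 1 = 0) := fun k => by omega
          simp [this, hu]
        · have hm : m < n := by have := j.isLt; omega
          have hcond : ∀ k : Fin n, ((k : ℕ) + 1 = m + 1) ↔ k = ⟨m, hm⟩ := by
            intro k
            rw [Fin.ext_iff]
            constructor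
            · intro h; simpa using Nat.succ_injective h
            · intro h; simp [h]
          rw [Finset.sum_congr rfl fun k _ => by rw [if_congr (hcond k) rfl rfl]]
          rw [Finset.sum_ite_eq' Finset.univ (⟨m, hm⟩ : Fin n) v]
          have hmcond : 1 ≤ m + 1 ∧ m + 1 ≤ n := ⟨by omega, by omega⟩
          simp only [hu]
          rw [dif_pos hmcond]
          simp
      rw [e1, e2, hu1 j]
    have hinr1 : w (Sum.inr 1) = (ρ : ℂ) * u n := by
      rw [hw]
      have hterm : ∀ k : Fin n, (starRingEnd ℂ) (Matrix.fromCols M H k (Sum.inr 1)) * v k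
          = (ρ : ℂ) * (if k = (⟨n - 1, by omega⟩ : Fin n) then v k else 0) := by
        intro k
        rw [Matrix.fromCols_apply_inr, hH]
        simp only [Matrix.of_apply]
        have h10 : (1 : Fin 2) ≠ 0 := by decide
        rw [if_neg h10]
        have hcond : ((k : ℕ) = n - 1) ↔ k = (⟨n - 1, by omega⟩ : Fin n) := by
          rw [Fin.ext_iff]
        rw [if_congr hcond rfl rfl]
        split_ifs with h
        · rw [Complex.conj_ofReal]
        · simp
      rw [Finset.sum_congr rfl fun k _ => hterm k, ← Finset.mul_sum]
      congr 1
      rw [Finset.sum_ite_eq' Finset.univ (⟨n - 1, by omega⟩ : Fin n) v]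
      have hcond : 1 ≤ n ∧ n ≤ n := ⟨hn, le_refl n⟩
      simp only [hu]
      rw [dif_pos hcond]
      simp
    have hS1 : ∑ j ∈ Finset.range (n + 1), x j ^ 2 = 1 := by
      have hv2 : ∑ i : Fin n, ‖v i‖ ^ 2 = 1 := by
        rw [EuclideanSpace.norm_eq] at hv
        exact Real.sqrt_eq_one.mp hv
      rw [Finset.sum_range_succ', h0]
      have e : ∑ j ∈ Finset.range n, x (j + 1) ^ 2 = ∑ i : Fin n, ‖v i‖ ^ 2 := by
        rw [← Fin.sum_univ_eq_sum_range (fun j => x (j + 1) ^ 2) n]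
        refine Finset.sum_congr rfl fun i _ => ?_
        rw [hx]
        simp only
        rw [hu1 i]
      rw [e, hv2]
      norm_num
    have hnn : 0 ≤ ρ * Real.sin (π / ((n : ℝ) + 1)) := mul_nonneg hρ0.le hσpos.le
    have key : (ρ * Real.sin (π / ((n : ℝ) + 1))) ^ 2 ≤ ∑ i, ‖w i‖ ^ 2 := by
      have c1 : (ρ * Real.sin (π / ((n : ℝ) + 1))) ^ 2
          = ρ ^ 2 * Real.sin (π / ((n : ℝ) + 1)) ^ 2 * ∑ j ∈ Finset.range (n + 1), x j ^ 2 := by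
        rw [hS1]; ring
      have c2 := lemA hn x h0 hend ρ t hρ0.le (norm_nonneg _)
      have c3 : ∑ j ∈ Finset.range (n + 1), (ρ * x j - t * x (j + 1)) ^ 2 ≤ ∑ i, ‖w i‖ ^ 2 := by
        rw [Fintype.sum_sum_type, Fin.sum_univ_two, Finset.sum_range_succ]
        have e1 : ∑ j ∈ Finset.range n, (ρ * x j - t * x (j + 1)) ^ 2
            ≤ ∑ j : Fin n, ‖w (Sum.inl j)‖ ^ 2 := by
          rw [← Fin.sum_univ_eq_sum_range (fun j => (ρ * x j - t * x (j + 1)) ^ 2) n]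
          apply Finset.sum_le_sum
          intro j _
          have habs : |ρ * x (j : ℕ) - t * x ((j : ℕ) + 1)| ≤ ‖w (Sum.inl j)‖ := by
            rw [hinl j]
            have h3 := abs_norm_sub_norm_le ((ρ : ℂ) * u (j : ℕ)) (-(a * u ((j : ℕ) + 1)))
            rw [sub_neg_eq_add] at h3
            have e3 : ‖(ρ : ℂ) * u (j : ℕ)‖ = ρ * x (j : ℕ) := by
              rw [norm_mul, Complex.norm_real, Real.norm_of_nonneg hρ0.le, hx]
            have e4 : ‖-(a * u ((j : ℕ) + 1))‖ = t * x ((j : ℕ) + 1) := by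
              rw [norm_neg, norm_mul, hat, hx]
            rw [e3, e4, add_comm ((ρ : ℂ) * u (j : ℕ))] at h3
            exact h3
          calc (ρ * x (j : ℕ) - t * x ((j : ℕ) + 1)) ^ 2
              = |ρ * x (j : ℕ) - t * x ((j : ℕ) + 1)| ^ 2 := (sq_abs _).symm
            _ ≤ ‖w (Sum.inl j)‖ ^ 2 := by
                apply pow_le_pow_left₀ (abs_nonneg _) habs
        have e2 : (ρ * x n - t * x (n + 1)) ^ 2 ≤ ‖w (Sum.inr 1)‖ ^ 2 := by
          rw [hinr1, hend, mul_zero, sub_zero]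
          have e5 : ‖(ρ : ℂ) * u n‖ = ρ * x n := by
            rw [norm_mul, Complex.norm_real, Real.norm_of_nonneg hρ0.le, hx]
          rw [e5]
        linarith [e1, e2, sq_nonneg ‖w (Sum.inr 0)‖]
      calc (ρ * Real.sin (π / ((n : ℝ) + 1))) ^ 2
          = ρ ^ 2 * Real.sin (π / ((n : ℝ) + 1)) ^ 2 * ∑ j ∈ Finset.range (n + 1), x j ^ 2 := c1
        _ ≤ ∑ j ∈ Finset.range (n + 1), (ρ * x j - t * x (j + 1)) ^ 2 := c2
        _ ≤ ∑ i, ‖w i‖ ^ 2 := c3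
    calc ρ * Real.sin (π / ((n : ℝ) + 1))
        = Real.sqrt ((ρ * Real.sin (π / ((n : ℝ) + 1))) ^ 2) := (Real.sqrt_sq hnn).symm
      _ ≤ Real.sqrt (∑ i, ‖w i‖ ^ 2) := Real.sqrt_le_sqrt key
      _ = ‖w‖ := (EuclideanSpace.norm_eq w).symm
  · -- easy bound
    have hx0 : (0 : ℝ) ≤ π / ((n : ℝ) + 1) := by positivity
    have hx' : π / ((n : ℝ) + 1) ≤ π / 2 := by
      rw [div_le_div_iff₀ hn1 two_pos]
      nlinarith [Real.pi_pos]
    have h2 := Real.mul_le_sin hx0 hx'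
    have hπ : π ≠ 0 := Real.pi_ne_zero
    have e : 2 / π * (π / ((n : ℝ) + 1)) = 2 / ((n : ℝ) + 1) := by
      field_simp
    rw [e] at h2
    have h3 : (1 : ℝ) / ((n : ℝ) + 1) ≤ Real.sin (π / ((n : ℝ) + 1)) := by
      refine le_trans ?_ h2
      rw [div_le_div_iff₀ hn1 hn1]
      nlinarith

    calc ρ / ((n : ℝ) + 1) = ρ * (1 / ((n : ℝ) + 1)) := by ring
      _ ≤ ρ * Real.sin (π / ((n : ℝ) + 1)) := mul_le_mul_of_nonneg_left h3 hρ0.le
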